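/- The precomposition functor p^* : Fun(R, Set) → Fun(D_R, Set) given by precomposing with p is fully faithful; that is, the functor p : D_R → R is absolutely dense. -/

import Mathlib

open CategoryTheory

universe u

namespace Unrolling

/-- A morphism is "an identity" if it is the `eqToHom` of an equality of objects. -/
def IsIdArrow {C : Type*} [Category C] {x y : C} (m : x ⟶ y) : Prop :=
  ∃ h : x = y, m = eqToHom h

/-- A morphism lies in the image of the functor `F` (up to the evident equalities of objects). -/
def InImg {A C : Type*} [Category A] [Category C] (F : A ⥤ C) {x y : C} (m : x ⟶ y) : Prop :=
  ∃ (a b : A) (k : a ⟶ b) (ha : F.obj a = x) (hb : F.obj b = y),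
    m = eqToHom ha.symm ≫ F.map k ≫ eqToHom hb

variable {R₀ R Fs : Type u} [SmallCategory R₀] [SmallCategory R] [SmallCategory Fs]

/-- The free category comonad applied to a functor `c : R₀ ⥤ R`, i.e. the induced functor
between path categories. -/
def freeMap (c : R₀ ⥤ R) : Paths R₀ ⥤ Paths R where
  obj x := c.obj x
  map f := c.toPrefunctor.mapPath f
  map_id _ := rfl
  map_comp f g := c.toPrefunctor.mapPath_comp f g

/-- A "free isomorphism": the image under `i : Paths R ⥤ F_≃(R)` of a length-one path whose
arrow is an isomorphism of `R`. -/
def FreeIso (i : Paths R ⥤ Fs) {x y : Fs} (m : x ⟶ y) : Prop :=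
  ∃ (a b : R) (f : a ⟶ b) (ha : i.obj ((Paths.of R).obj a) = x) (hb : i.obj ((Paths.of R).obj b) = y),
    IsIso f ∧ m = eqToHom ha.symm ≫ i.map ((Paths.of R).map f) ≫ eqToHom hb

/-- The twisted arrow category of `C`: objects are morphisms of `C`. -/
structure Tw (C : Type*) [Category C] where
  left : C
  right : C
  hom : left ⟶ right

/-- Morphisms `f → f'` in the twisted arrow category: pairs `(u, v)` with `f' = u ≫ f ≫ v`. -/
@[ext]
structure TwHom {C : Type*} [Category C] (X Y : Tw C) where
  u : Y.left ⟶ X.left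
  v : X.right ⟶ Y.right
  w : Y.hom = u ≫ X.hom ≫ v

instance {C : Type*} [Category C] : Category (Tw C) where
  Hom := TwHom
  id X := ⟨𝟙 _, 𝟙 _, by simp⟩
  comp {X Y Z} f g := ⟨g.u ≫ f.u, f.v ≫ g.v, by rw [g.w, f.w]; simp⟩
  id_comp f := by apply TwHom.ext <;> simp [CategoryStruct.id, CategoryStruct.comp]
  comp_id f := by apply TwHom.ext <;> simp [CategoryStruct.id, CategoryStruct.comp]
  assoc f g h := by apply TwHom.ext <;> simp [CategoryStruct.comp]

/-- The defining property of the objects of `D_R` inside the twisted arrow category of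
`F_≃(R)`: those morphisms factoring as (identity or image of `R₀`) followed by
(identity or free isomorphism). -/
def InD (i₀ : R₀ ⥤ Fs) (i : Paths R ⥤ Fs) (X : Tw Fs) : Prop :=
  ∃ (z : Fs) (g : X.left ⟶ z) (h : z ⟶ X.right),
    X.hom = g ≫ h ∧ (IsIdArrow g ∨ InImg i₀ g) ∧ (IsIdArrow h ∨ FreeIso i h)

/-- The category `D_R`, a full subcategory of the twisted arrow category of `F_≃(R)`. -/
abbrev DR (i₀ : R₀ ⥤ Fs) (i : Paths R ⥤ Fs) := ObjectProperty.FullSubcategory (InD i₀ i)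

/-- The projection `p : D_R ⥤ R`, sending an object `f : x ⟶ y` to `p₀(y)` and a morphism
`(u, v)` to `p₀(v)`. -/
def pFun (i₀ : R₀ ⥤ Fs) (i : Paths R ⥤ Fs) (p₀ : Fs ⥤ R) : DR i₀ i ⥤ R where
  obj X := p₀.obj X.obj.right
  map {X Y} t := p₀.map (TwHom.v t.hom)
  map_id X := p₀.map_id _
  map_comp f g := p₀.map_comp _ _

@[simp] lemma paths_of_obj {V : Type u} [Quiver V] (a : V) :
    (Paths.of V).obj a = a := rfl

@[simp] lemma paths_of_map {V : Type u} [Quiver V] {a b : V} (f : a ⟶ b) :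
    ((Paths.of V).map f : (Paths.of V).obj a ⟶ (Paths.of V).obj b) = f.toPath := rfl

lemma fsub_eqToHom {C : Type u} [SmallCategory C] {P : C → Prop}
    {X Y : ObjectProperty.FullSubcategory P} (h : X = Y) :
    (eqToHom h : X ⟶ Y).hom =
      (eqToHom (congrArg ObjectProperty.FullSubcategory.obj h) : X.obj ⟶ Y.obj) := by
  subst h; rfl

/-- The identity object of `D_R` at `y : Fs`. -/
def idObj (i₀ : R₀ ⥤ Fs) (i : Paths R ⥤ Fs) (y : Fs) : DR i₀ i :=
  ⟨⟨y, y, 𝟙 y⟩, y, 𝟙 y, 𝟙 y, by simp,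
    Or.inl ⟨rfl, by simp⟩, Or.inl ⟨rfl, by simp⟩⟩

/-- The canonical morphism `idObj (right X) ⟶ X` in `D_R`. -/
def toId (i₀ : R₀ ⥤ Fs) (i : Paths R ⥤ Fs) (X : DR i₀ i) :
    idObj i₀ i X.obj.right ⟶ X :=
  ⟨⟨X.obj.hom, 𝟙 _, by simp [idObj]⟩⟩

/-- The canonical morphism `idObj (left X) ⟶ X` in `D_R`. -/
def fromId (i₀ : R₀ ⥤ Fs) (i : Paths R ⥤ Fs) (X : DR i₀ i) :
    idObj i₀ i X.obj.left ⟶ X :=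
  ⟨⟨𝟙 _, X.obj.hom, by simp [idObj]⟩⟩

lemma i_surj (c : R₀ ⥤ R) (i₀ : R₀ ⥤ Fs) (i : Paths R ⥤ Fs)
    (hcomm : pathComposition R₀ ⋙ i₀ = freeMap c ⋙ i)
    (huniv : ∀ (T : Cat.{u, u}) (q₀ : R₀ ⥤ T) (q : Paths R ⥤ T),
      pathComposition R₀ ⋙ q₀ = freeMap c ⋙ q →
      ∃! d : Fs ⥤ T, i₀ ⋙ d = q₀ ∧ i ⋙ d = q) :
    ∀ y : Fs, ∃ r : Paths R, i.obj r = y := by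
  set P : Fs → Prop := fun y => ∃ r : Paths R, i.obj r = y with hP
  have hP0 : ∀ a : R₀, P (i₀.obj a) :=
    fun a => ⟨c.obj a, (Functor.congr_obj hcomm a).symm⟩
  let i' : Paths R ⥤ ObjectProperty.FullSubcategory P :=
    ObjectProperty.lift P i (fun r => ⟨r, rfl⟩)
  let i₀' : R₀ ⥤ ObjectProperty.FullSubcategory P := ObjectProperty.lift P i₀ hP0
  have hobj : ∀ a, (pathComposition R₀ ⋙ i₀').obj a = (freeMap c ⋙ i').obj a :=
    fun a => ObjectProperty.FullSubcategory.ext (Functor.congr_obj hcomm a)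
  have hcomm' : pathComposition R₀ ⋙ i₀' = freeMap c ⋙ i' := by
    refine CategoryTheory.Functor.ext hobj (fun a b f => ?_)
    ext
    show i₀.map _ = _
    simp only [ObjectProperty.FullSubcategory.comp_hom]
    rw [fsub_eqToHom, fsub_eqToHom]
    exact Functor.congr_hom hcomm f
  obtain ⟨d, ⟨hd₀, hd⟩, -⟩ := huniv (Cat.of (ObjectProperty.FullSubcategory P)) i₀' i' hcomm'
  obtain ⟨d', _, hu⟩ := huniv (Cat.of Fs) i₀ i hcomm
  have h1 : d ⋙ ObjectProperty.ι P = d' := by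
    refine hu _ ⟨?_, ?_⟩
    · exact congrArg (fun F => F ⋙ ObjectProperty.ι P) hd₀
    · exact congrArg (fun F => F ⋙ ObjectProperty.ι P) hd
  have h2 : 𝟭 Fs = d' := hu _ ⟨Functor.comp_id _, Functor.comp_id _⟩
  intro y
  have hy : (d.obj y).obj = y := Functor.congr_obj (h1.trans h2.symm) y
  obtain ⟨r, hr⟩ := (d.obj y).property
  exact ⟨r, hr.trans hy⟩

lemma pathComp_toPath {C : Type u} [SmallCategory C] {a b : C} (f : a ⟶ b) :
    (pathComposition C).map f.toPath = f := composePath_toPath f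

lemma natSq_transport {C : Type u} [Category C] (G H : C ⥤ Type u) {a a' b b' : C}
    (ea : a = b) (eb : a' = b') (α : G.obj a ⟶ H.obj a) (β : G.obj a' ⟶ H.obj a')
    (f : b ⟶ b')
    (N : α ≫ H.map (eqToHom ea ≫ f ≫ eqToHom eb.symm) =
      G.map (eqToHom ea ≫ f ≫ eqToHom eb.symm) ≫ β) :
    G.map f ≫ eqToHom (congrArg G.obj eb).symm ≫ β ≫ eqToHom (congrArg H.obj eb) =
      (eqToHom (congrArg G.obj ea).symm ≫ α ≫ eqToHom (congrArg H.obj ea)) ≫ H.map f := by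
  subst ea eb; simpa using N.symm

/-- Given a functor `c : R₀ ⥤ R` along which every morphism of `R` lifts up to
isomorphism, form the pushout `F_≃(R)` (here `Fs`, with structure maps `i₀ : R₀ ⥤ Fs` and
`i : Paths R ⥤ Fs`, satisfying the strict universal property of the pushout in `Cat` of
`ε : Paths R₀ ⥤ R₀` along `F(c) : Paths R₀ ⥤ Paths R`), the induced functor `p₀ : Fs ⥤ R`,
and the projection `p : D_R ⥤ R`.  Then the precomposition functor
`p^* : (R ⥤ Type u) ⥤ (D_R ⥤ Type u)` is fully faithful, i.e. `p` is absolutely dense. -/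
theorem precomposition_fullyFaithful
    (c : R₀ ⥤ R)
    (hlift : ∀ {a b : R} (f : a ⟶ b), ∃ (x y : R₀) (k : x ⟶ y)
      (w : a ≅ c.obj x) (w' : b ≅ c.obj y), w.hom ≫ c.map k = f ≫ w'.hom)
    (i₀ : R₀ ⥤ Fs) (i : Paths R ⥤ Fs)
    (hcomm : pathComposition R₀ ⋙ i₀ = freeMap c ⋙ i)
    (huniv : ∀ (T : Cat.{u, u}) (q₀ : R₀ ⥤ T) (q : Paths R ⥤ T),
      pathComposition R₀ ⋙ q₀ = freeMap c ⋙ q →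
      ∃! d : Fs ⥤ T, i₀ ⋙ d = q₀ ∧ i ⋙ d = q)
    (p₀ : Fs ⥤ R) (hp₁ : i₀ ⋙ p₀ = c) (hp₂ : i ⋙ p₀ = pathComposition R) :
    ((Functor.whiskeringLeft (DR i₀ i) R (Type u)).obj (pFun i₀ i p₀)).Full ∧
    ((Functor.whiskeringLeft (DR i₀ i) R (Type u)).obj (pFun i₀ i p₀)).Faithful := by
  have isurj := i_surj c i₀ i hcomm huniv
  have ob : ∀ r : R, p₀.obj (i.obj r) = r := fun r => Functor.congr_obj hp₂ r
  have ffull : ((Functor.whiskeringLeft (DR i₀ i) R (Type u)).obj (pFun i₀ i p₀)).Full := by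
    refine ⟨fun {G H} η => ?_⟩
    have lemA : ∀ X : DR i₀ i, η.app X = η.app (idObj i₀ i X.obj.right) := by
      intro X
      have h := η.naturality (toId i₀ i X)
      have hv : (pFun i₀ i p₀).map (toId i₀ i X) = 𝟙 (p₀.obj X.obj.right) := by
        show p₀.map (𝟙 _) = _
        simp [idObj]
      simp only [Functor.whiskeringLeft_obj_obj, Functor.comp_map] at h
      dsimp only [pFun, toId, idObj] at h
      simp only [CategoryTheory.Functor.map_id, Category.id_comp, Category.comp_id,
        p₀.map_id] at h
      exact h
    have lemB : ∀ (u v : Fs) (m : u ⟶ v), InD i₀ i ⟨u, v, m⟩ →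
        η.app (idObj i₀ i u) ≫ H.map (p₀.map m) =
          G.map (p₀.map m) ≫ η.app (idObj i₀ i v) := by
      intro u v m hm
      have h := η.naturality (fromId i₀ i ⟨⟨u, v, m⟩, hm⟩)
      simp only [Functor.whiskeringLeft_obj_obj, Functor.comp_map] at h
      dsimp only [pFun, fromId, idObj] at h
      rw [lemA ⟨⟨u, v, m⟩, hm⟩] at h
      exact h.symm
    have lemC : ∀ {u v w : Fs} (m₁ : @Quiver.Hom Fs CategoryStruct.toQuiver u v)
        (m₂ : @Quiver.Hom Fs CategoryStruct.toQuiver v w),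
        (η.app (idObj i₀ i u) ≫ H.map (p₀.map m₁) =
          G.map (p₀.map m₁) ≫ η.app (idObj i₀ i v)) →
        (η.app (idObj i₀ i v) ≫ H.map (p₀.map m₂) =
          G.map (p₀.map m₂) ≫ η.app (idObj i₀ i w)) →
        η.app (idObj i₀ i u) ≫ H.map (p₀.map (m₁ ≫ m₂)) =
          G.map (p₀.map (m₁ ≫ m₂)) ≫ η.app (idObj i₀ i w) := by
      intro u v w m₁ m₂ h1 h2
      erw [p₀.map_comp, G.map_comp, H.map_comp, ← Category.assoc, h1, Category.assoc, h2,
        ← Category.assoc]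
    have econg : ∀ {y y' : Fs} (h : y = y'),
        η.app (idObj i₀ i y) =
          eqToHom (congrArg (fun z => G.obj (p₀.obj z)) h) ≫ η.app (idObj i₀ i y') ≫
            eqToHom (congrArg (fun z => H.obj (p₀.obj z)) h).symm := by
      intro y y' h; subst h; simp; rfl
    refine ⟨⟨fun r => eqToHom (congrArg G.obj (ob r)).symm ≫ η.app (idObj i₀ i (i.obj r)) ≫
        eqToHom (congrArg H.obj (ob r)), ?_⟩, ?_⟩
    · intro r r' f
      obtain ⟨x, y, k, w, w', hw⟩ := hlift f
      have hf : w.hom ≫ c.map k ≫ w'.inv = f := by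
        rw [← Category.assoc, hw, Category.assoc, Iso.hom_inv_id, Category.comp_id]
      have hx : i₀.obj x = i.obj (c.obj x) := Functor.congr_obj hcomm x
      have hy : i₀.obj y = i.obj (c.obj y) := Functor.congr_obj hcomm y
      have N1 := lemB _ _ (i.map ((Paths.of R).map w.hom))
        ⟨i.obj r, 𝟙 _, i.map ((Paths.of R).map w.hom), (Category.id_comp _).symm,
          Or.inl ⟨rfl, by rfl⟩,
          Or.inr ⟨r, c.obj x, w.hom, rfl, rfl, ⟨⟨w.inv, by simp, by simp⟩⟩, by simp; exact (Category.id_comp _).symm⟩⟩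
      have N2 := lemB _ _ (eqToHom hx.symm ≫ i₀.map k ≫ eqToHom hy)
        ⟨i.obj (c.obj y), eqToHom hx.symm ≫ i₀.map k ≫ eqToHom hy, 𝟙 _,
          (Category.comp_id _).symm, Or.inr ⟨x, y, k, hx, hy, rfl⟩, Or.inl ⟨rfl, by rfl⟩⟩
      have N3 := lemB _ _ (i.map ((Paths.of R).map w'.inv))
        ⟨i.obj (c.obj y), 𝟙 _, i.map ((Paths.of R).map w'.inv), (Category.id_comp _).symm,
          Or.inl ⟨rfl, by rfl⟩,
          Or.inr ⟨c.obj y, r', w'.inv, rfl, rfl, ⟨⟨w'.hom, by simp, by simp⟩⟩, by simp; exact (Category.id_comp _).symm⟩⟩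
      have N := lemC _ _ N1 (lemC _ _ N2 N3)
      have hpm : p₀.map (i.map ((Paths.of R).map w.hom) ≫
            (eqToHom hx.symm ≫ i₀.map k ≫ eqToHom hy) ≫ i.map ((Paths.of R).map w'.inv)) =
          eqToHom (ob r) ≫ f ≫ eqToHom (ob r').symm := by
        have c1 := Functor.congr_hom hp₂ ((Paths.of R).map w.hom)
        have c3 := Functor.congr_hom hp₂ ((Paths.of R).map w'.inv)
        have c2 := Functor.congr_hom hp₁ k
        simp only [Functor.comp_map] at c1 c2 c3
        rw [← hf]
        simp only [Functor.map_comp, eqToHom_map, c1, c2, c3]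
        simp
        erw [eqToHom_map, c3]
        erw [pathComp_toPath, pathComp_toPath]
        simp
        erw [eqToHom_trans_assoc, eqToHom_trans_assoc]
        erw [eqToHom_refl, Category.id_comp, eqToHom_refl, Category.id_comp]
        rfl
      erw [hpm] at N
      show G.map f ≫ _ = _
      exact natSq_transport G H (ob r) (ob r') _ _ f N
    · have key : ∀ v : Fs,
          eqToHom (congrArg G.obj (ob (p₀.obj v))).symm ≫
            η.app (idObj i₀ i (i.obj (p₀.obj v))) ≫
              eqToHom (congrArg H.obj (ob (p₀.obj v))) = η.app (idObj i₀ i v) := by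
        intro v
        obtain ⟨r, rfl⟩ := isurj v
        have h : i.obj (p₀.obj (i.obj r)) = i.obj r := congrArg i.obj (ob r)
        refine Eq.symm ((conj_eqToHom_iff_heq _ _ _
          (congrArg H.obj (ob (p₀.obj (i.obj r)))).symm).mpr ?_)
        exact congr_arg_heq (fun z => η.app (idObj i₀ i z)) h.symm
      apply NatTrans.ext
      funext X
      show _ = η.app X
      rw [lemA X]
      exact key X.obj.right
  refine ⟨ffull, ⟨fun {G H} θ θ' hθ => ?_⟩⟩
  apply NatTrans.ext
  funext r
  have h : θ.app (p₀.obj (i.obj r)) = θ'.app (p₀.obj (i.obj r)) :=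
    NatTrans.congr_app hθ (idObj i₀ i (i.obj r))
  rw [show (r : R) = p₀.obj (i.obj r) from (ob r).symm]
  exact h


end Unrolling
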